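/- Let $n\ge 5$ and let $v_1,\dots,v_n=v_0\in\mathbb{Z}^2$ be the rays (in clockwise order) of a complete nonsingular fan of rank 2 containing the cones generated by $\{(1,0),(0,1)\}$ and $\{(-1,0),(0,-1)\}$, with $v_1=(1,0)$, $v_{n-2}=(0,-1)$, $v_{n-1}=(-1,0)$, $v_n=(0,1)$, and quiddity sequence $a_i$ defined by $a_i v_i = v_{i-1}+v_{i+1}$. Then there exists an index $i$ with $2\le i\le n-3$ such that $a_i=1$. -/

import Mathlib

/-- Let `n ≥ 5` and let `v 1, …, v n = v 0` be the rays (in clockwise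
order) of a complete nonsingular fan of rank 2 containing `cone{(1,0),(0,1)}` and
`cone{(-1,0),(0,-1)}`, with `v 1 = (1,0)`, `v (n-2) = (0,-1)`, `v (n-1) = (-1,0)`,
`v n = v 0 = (0,1)`, and quiddity sequence `a` defined by `a i • v i = v (i-1) + v (i+1)`.
Then there is an index `i` with `2 ≤ i ≤ n-3` and `a i = 1`. -/
theorem stmt_0 (n : ℕ) (hn : 5 ≤ n) (v : ℕ → ℤ × ℤ) (a : ℕ → ℤ)
    (hv0 : v 0 = (0, 1)) (hv1 : v 1 = (1, 0))
    (hvn2 : v (n - 2) = (0, -1)) (hvn1 : v (n - 1) = (-1, 0)) (hvn : v n = (0, 1))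
    -- consecutive rays form a `ℤ`-basis, in clockwise orientation
    (hbasis : ∀ i < n, (v i).1 * (v (i + 1)).2 - (v i).2 * (v (i + 1)).1 = -1)
    -- the rays from `(1,0)` to `(-1,0)` lie in the closed fourth quadrant
    (hquad : ∀ i, 1 ≤ i → i ≤ n - 2 → 0 ≤ (v i).1 ∧ (v i).2 ≤ 0)
    -- quiddity relations
    (hrec : ∀ i, 1 ≤ i → i ≤ n - 1 → a i • v i = v (i - 1) + v (i + 1)) :
    ∃ i, 2 ≤ i ∧ i ≤ n - 3 ∧ a i = 1 := by
  set N : ℕ → ℤ := fun j => (v j).1 - (v j).2 with hN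
  -- every ray in the quadrant is nonzero, so N ≥ 1
  have hNpos : ∀ j, 1 ≤ j → j ≤ n - 2 → 1 ≤ N j := by
    intro j h1 h2
    obtain ⟨hx, hy⟩ := hquad j h1 h2
    by_contra h
    have hNj : N j = 0 := by simp only [hN] at *; omega
    have hx0 : (v j).1 = 0 := by simp only [hN] at hNj; omega
    have hy0 : (v j).2 = 0 := by simp only [hN] at hNj; omega
    have hb := hbasis j (by omega)
    rw [hx0, hy0] at hb
    simp at hb
  -- interior rays (index in [2, n-3]) have N ≥ 2
  have hN2 : ∀ j, 2 ≤ j → j ≤ n - 3 → 2 ≤ N j := by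
    intro j h1 h2
    have hp := hNpos j (by omega) (by omega)
    by_contra h
    have hNj : N j = 1 := by omega
    obtain ⟨hx, hy⟩ := hquad j (by omega) (by omega)
    have hcase : ((v j).1 = 1 ∧ (v j).2 = 0) ∨ ((v j).1 = 0 ∧ (v j).2 = -1) := by
      simp only [hN] at hNj; omega
    rcases hcase with ⟨hx1, hy1⟩ | ⟨hx1, hy1⟩
    · -- v j = (1,0): previous ray would have y-coordinate 1
      have hb := hbasis (j - 1) (by omega)
      have hj : j - 1 + 1 = j := by omega
      rw [hj, hx1, hy1] at hb
      have := (hquad (j - 1) (by omega) (by omega)).2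
      simp at hb
      omega
    · -- v j = (0,-1): next ray would have x-coordinate -1
      have hb := hbasis j (by omega)
      rw [hx1, hy1] at hb
      have := (hquad (j + 1) (by omega) (by omega)).1
      simp at hb
      omega
  -- the quiddity relation in terms of N
  have hsum : ∀ i, 1 ≤ i → i ≤ n - 1 → a i * N i = N (i - 1) + N (i + 1) := by
    intro i h1 h2
    have h := hrec i h1 h2
    rw [Prod.ext_iff] at h
    have hx : a i * (v i).1 = (v (i - 1)).1 + (v (i + 1)).1 := by
      simpa [smul_eq_mul] using h.1
    have hy : a i * (v i).2 = (v (i - 1)).2 + (v (i + 1)).2 := by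
      simpa [smul_eq_mul] using h.2
    simp only [hN]
    ring_nf
    ring_nf at hx hy
    linarith
  -- choose an interior index maximizing N, with largest index among maximizers
  have hne : (Finset.Icc 2 (n - 3)).Nonempty := by
    rw [Finset.nonempty_Icc]; omega
  obtain ⟨i, hi, hmax⟩ := Finset.exists_max_image (Finset.Icc 2 (n - 3))
    (fun j => N j * (n : ℤ) + (j : ℤ)) hne
  rw [Finset.mem_Icc] at hi
  obtain ⟨hi2, hi3⟩ := hi
  have hM : 2 ≤ N i := hN2 i hi2 hi3
  have hnZ : (5 : ℤ) ≤ (n : ℤ) := by exact_mod_cast hn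
  have hiZ : (i : ℤ) ≤ (n : ℤ) - 3 := by
    have : (i : ℤ) ≤ ((n - 3 : ℕ) : ℤ) := by exact_mod_cast hi3
    omega
  -- N (i-1) ≤ N i
  have hprev : N (i - 1) ≤ N i := by
    rcases eq_or_lt_of_le hi2 with h2 | h2
    · have : i - 1 = 1 := by omega
      rw [this]
      have : N 1 = 1 := by simp [hN, hv1]
      omega
    · have hmem : i - 1 ∈ Finset.Icc 2 (n - 3) := by rw [Finset.mem_Icc]; omega
      have h := hmax (i - 1) hmem
      have hc : ((i - 1 : ℕ) : ℤ) = (i : ℤ) - 1 := by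
        have : 1 ≤ i := by omega
        push_cast [Nat.cast_sub this]; ring
      rw [hc] at h
      nlinarith
  -- N (i+1) ≤ N i - 1
  have hnext : N (i + 1) ≤ N i - 1 := by
    rcases eq_or_lt_of_le hi3 with h3 | h3
    · have : i + 1 = n - 2 := by omega
      rw [this]
      have : N (n - 2) = 1 := by simp [hN, hvn2]
      omega
    · have hmem : i + 1 ∈ Finset.Icc 2 (n - 3) := by rw [Finset.mem_Icc]; omega
      have h := hmax (i + 1) hmem
      push_cast at h
      nlinarith
  have hp1 : 1 ≤ N (i - 1) := hNpos (i - 1) (by omega) (by omega)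
  have hp2 : 1 ≤ N (i + 1) := hNpos (i + 1) (by omega) (by omega)
  have hs := hsum i (by omega) (by omega)
  refine ⟨i, hi2, hi3, ?_⟩
  have ha1 : a i ≤ 1 := by nlinarith
  have ha2 : 1 ≤ a i := by nlinarith
  omega
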